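/- Let C = ⟨(1+2v²)f₁, (2v+2v²)f₂, (v+2v²)f₃⟩ be a cyclic (respectively negacyclic) code of length n over R, where fᵢ is the generator polynomial of the associated ternary cyclic (negacyclic) code Cᵢ, a monic divisor of xⁿ−1 (respectively xⁿ+1) in Z₃[x]. Then C^⊥ ⊆ C if and only if xⁿ−1 ≡ 0 (mod fᵢ·fᵢ*) (respectively xⁿ+1 ≡ 0 (mod fᵢ·fᵢ*)) for i = 1, 2, 3, where fᵢ* is the reciprocal polynomial of fᵢ. Equivalently, C^⊥ ⊆ C if and only if Cᵢ^⊥ ⊆ Cᵢ for i = 1, 2, 3. -/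

import Mathlib

/-- The ring `R = Z₃ + vZ₃ + v²Z₃ = Z₃[v]/(v³ - v)`, with elements written
`a + v*b + v²*c` for `a b c : ZMod 3` (stored as the three coordinates). -/
@[ext]
structure R3 : Type where
  a : ZMod 3
  b : ZMod 3
  c : ZMod 3
  deriving DecidableEq

namespace R3

instance : Zero R3 := ⟨⟨0, 0, 0⟩⟩
instance : One R3 := ⟨⟨1, 0, 0⟩⟩
instance : Add R3 := ⟨fun x y => ⟨x.a + y.a, x.b + y.b, x.c + y.c⟩⟩
instance : Neg R3 := ⟨fun x => ⟨-x.a, -x.b, -x.c⟩⟩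
/-- Multiplication induced by `v³ = v` :
`(a+vb+v²c)(a'+vb'+v²c') = aa' + v(ab'+a'b+bc'+b'c) + v²(ac'+a'c+bb'+cc')`. -/
instance : Mul R3 := ⟨fun x y =>
  ⟨x.a * y.a,
   x.a * y.b + x.b * y.a + x.b * y.c + x.c * y.b,
   x.a * y.c + x.c * y.a + x.b * y.b + x.c * y.c⟩⟩

@[simp] lemma zero_a : (0 : R3).a = 0 := rfl
@[simp] lemma zero_b : (0 : R3).b = 0 := rfl
@[simp] lemma zero_c : (0 : R3).c = 0 := rfl
@[simp] lemma one_a : (1 : R3).a = 1 := rfl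
@[simp] lemma one_b : (1 : R3).b = 0 := rfl
@[simp] lemma one_c : (1 : R3).c = 0 := rfl
@[simp] lemma add_a (x y : R3) : (x + y).a = x.a + y.a := rfl
@[simp] lemma add_b (x y : R3) : (x + y).b = x.b + y.b := rfl
@[simp] lemma add_c (x y : R3) : (x + y).c = x.c + y.c := rfl
@[simp] lemma neg_a (x : R3) : (-x).a = -x.a := rfl
@[simp] lemma neg_b (x : R3) : (-x).b = -x.b := rfl
@[simp] lemma neg_c (x : R3) : (-x).c = -x.c := rfl
@[simp] lemma mul_a (x y : R3) : (x * y).a = x.a * y.a := rfl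
@[simp] lemma mul_b (x y : R3) :
    (x * y).b = x.a * y.b + x.b * y.a + x.b * y.c + x.c * y.b := rfl
@[simp] lemma mul_c (x y : R3) :
    (x * y).c = x.a * y.c + x.c * y.a + x.b * y.b + x.c * y.c := rfl

private lemma thm_add_assoc (x y z : R3) : x + y + z = x + (y + z) := by ext <;> simp <;> ring
private lemma thm_zero_add (x : R3) : 0 + x = x := by ext <;> simp
private lemma thm_add_zero (x : R3) : x + 0 = x := by ext <;> simp
private lemma thm_add_comm (x y : R3) : x + y = y + x := by ext <;> simp <;> ring
private lemma thm_mul_assoc (x y z : R3) : x * y * z = x * (y * z) := by ext <;> simp <;> ring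
private lemma thm_one_mul (x : R3) : 1 * x = x := by ext <;> simp
private lemma thm_mul_one (x : R3) : x * 1 = x := by ext <;> simp
private lemma thm_left_distrib (x y z : R3) : x * (y + z) = x * y + x * z := by ext <;> simp <;> ring
private lemma thm_right_distrib (x y z : R3) : (x + y) * z = x * z + y * z := by ext <;> simp <;> ring
private lemma thm_mul_comm (x y : R3) : x * y = y * x := by ext <;> simp <;> ring
private lemma thm_zero_mul (x : R3) : 0 * x = 0 := by ext <;> simp
private lemma thm_mul_zero (x : R3) : x * 0 = 0 := by ext <;> simp
private lemma thm_neg_add_cancel (x : R3) : -x + x = 0 := by ext <;> simp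

instance : CommRing R3 where
  nsmul m x := ⟨m • x.a, m • x.b, m • x.c⟩
  nsmul_zero x := by ext <;> exact zero_nsmul (_ : ZMod 3)
  nsmul_succ m x := by ext <;> exact succ_nsmul (_ : ZMod 3) m
  zsmul m x := ⟨m • x.a, m • x.b, m • x.c⟩
  zsmul_zero' x := by ext <;> exact zero_zsmul (_ : ZMod 3)
  zsmul_succ' m x := by ext <;> exact SubNegMonoid.zsmul_succ' m (_ : ZMod 3)
  zsmul_neg' m x := by ext <;> exact SubNegMonoid.zsmul_neg' m (_ : ZMod 3)
  add_assoc := thm_add_assoc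
  zero_add := thm_zero_add
  add_zero := thm_add_zero
  add_comm := thm_add_comm
  mul_assoc := thm_mul_assoc
  one_mul := thm_one_mul
  mul_one := thm_mul_one
  left_distrib := thm_left_distrib
  right_distrib := thm_right_distrib
  mul_comm := thm_mul_comm
  zero_mul := thm_zero_mul
  mul_zero := thm_mul_zero
  neg_add_cancel := thm_neg_add_cancel

/-- The element `v` of `R = Z₃[v]/(v³-v)`. -/
def v : R3 := ⟨0, 1, 0⟩

/-- The natural inclusion `Z₃ → R`. -/
def iota : ZMod 3 →+* R3 where
  toFun t := ⟨t, 0, 0⟩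
  map_one' := by ext <;> simp
  map_mul' x y := by ext <;> simp
  map_zero' := by ext <;> simp
  map_add' x y := by ext <;> simp

instance : Algebra (ZMod 3) R3 := iota.toAlgebra

end R3

open R3 in
/-- The Gray map `φ : R → Z₃³`, `φ(a+vb+v²c) = (a, a+b+c, a+2b+c)`. -/
def gray (r : R3) : ZMod 3 × ZMod 3 × ZMod 3 :=
  (r.a, r.a + r.b + r.c, r.a + 2 * r.b + r.c)

/-- The Gray map extended blockwise to `φ : R^n → Z₃^{3n}`, where `Z₃^{3n}` is
identified with `Z₃^n × Z₃^n × Z₃^n` via the three length-`n` blocks. -/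
def grayV {n : ℕ} (r : Fin n → R3) :
    (Fin n → ZMod 3) × (Fin n → ZMod 3) × (Fin n → ZMod 3) :=
  (fun i => (r i).a,
   fun i => (r i).a + (r i).b + (r i).c,
   fun i => (r i).a + 2 * (r i).b + (r i).c)

/-- Hamming weight on `Z₃^{3n} = Z₃^n × Z₃^n × Z₃^n`. -/
def wtH {n : ℕ} (x : (Fin n → ZMod 3) × (Fin n → ZMod 3) × (Fin n → ZMod 3)) : ℕ :=
  hammingNorm x.1 + hammingNorm x.2.1 + hammingNorm x.2.2

/-- The Lee weight of an element of `R`: the Hamming weight of its Gray image. -/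
def wtLee (r : R3) : ℕ :=
  (if r.a ≠ 0 then 1 else 0) + (if r.a + r.b + r.c ≠ 0 then 1 else 0) +
    (if r.a + 2 * r.b + r.c ≠ 0 then 1 else 0)

/-- The Lee weight on `R^n`, extended additively. -/
def wtLeeV {n : ℕ} (x : Fin n → R3) : ℕ := ∑ i, wtLee (x i)

/-- The cyclic shift `σ(c₀,…,c_{n-1}) = (c_{n-1},c₀,…,c_{n-2})`. -/
def cyc {α : Type*} {n : ℕ} [NeZero n] (c : Fin n → α) : Fin n → α :=
  fun i => c (i - 1)

/-- The negacyclic shift `η(c₀,…,c_{n-1}) = (-c_{n-1},c₀,…,c_{n-2})`. -/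
def nega {α : Type*} [Neg α] {n : ℕ} [NeZero n] (c : Fin n → α) : Fin n → α :=
  fun i => if i = 0 then -c (i - 1) else c (i - 1)

/-- The `λ`-constacyclic shift `(c₀,…,c_{n-1}) ↦ (λc_{n-1},c₀,…,c_{n-2})`. -/
def consta {α : Type*} [Mul α] {n : ℕ} [NeZero n] (lam : α) (c : Fin n → α) : Fin n → α :=
  fun i => if i = 0 then lam * c (i - 1) else c (i - 1)

open Fin.NatCast in
/-- The quasi-cyclic shift `τ_{s,l}` of block length `l` on vectors of length `n = s*l`,
moving the last block of `l` coordinates to the front; equivalently, the cyclic shift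
by `l` positions. -/
def shiftBy {α : Type*} {n : ℕ} [NeZero n] (l : ℕ) (c : Fin n → α) : Fin n → α :=
  fun i => c (i - (l : Fin n))

/-- Apply a map to each of the three blocks of `Z₃^{3n} = Z₃^n × Z₃^n × Z₃^n`. -/
def blockMap {n : ℕ} (f : (Fin n → ZMod 3) → (Fin n → ZMod 3))
    (x : (Fin n → ZMod 3) × (Fin n → ZMod 3) × (Fin n → ZMod 3)) :
    (Fin n → ZMod 3) × (Fin n → ZMod 3) × (Fin n → ZMod 3) :=
  (f x.1, f x.2.1, f x.2.2)

/-- The Euclidean dual of a linear code over `R`. -/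
def dualR {n : ℕ} (C : Submodule R3 (Fin n → R3)) : Submodule R3 (Fin n → R3) where
  carrier := {x | ∀ y ∈ C, ∑ i, x i * y i = 0}
  add_mem' := by
    intro p q hp hq y hy
    simp only [Set.mem_setOf_eq] at *
    simp [Pi.add_apply, add_mul, Finset.sum_add_distrib, hp y hy, hq y hy]
  zero_mem' := by intro y hy; simp
  smul_mem' := by
    intro r p hp y hy
    simp only [Set.mem_setOf_eq] at *
    simp [Pi.smul_apply, smul_eq_mul, mul_assoc, ← Finset.mul_sum, hp y hy]

/-- The Euclidean dual of a ternary linear code. -/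
def dualZ {n : ℕ} (C : Submodule (ZMod 3) (Fin n → ZMod 3)) :
    Submodule (ZMod 3) (Fin n → ZMod 3) where
  carrier := {x | ∀ y ∈ C, ∑ i, x i * y i = 0}
  add_mem' := by
    intro p q hp hq y hy
    simp only [Set.mem_setOf_eq] at *
    simp [Pi.add_apply, add_mul, Finset.sum_add_distrib, hp y hy, hq y hy]
  zero_mem' := by intro y hy; simp
  smul_mem' := by
    intro r p hp y hy
    simp only [Set.mem_setOf_eq] at *
    simp [Pi.smul_apply, smul_eq_mul, mul_assoc, ← Finset.mul_sum, hp y hy]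

/-- The Euclidean inner product on `Z₃^{3n} = Z₃^n × Z₃^n × Z₃^n`. -/
def inner3 {n : ℕ} (x y : (Fin n → ZMod 3) × (Fin n → ZMod 3) × (Fin n → ZMod 3)) : ZMod 3 :=
  ∑ i, x.1 i * y.1 i + ∑ i, x.2.1 i * y.2.1 i + ∑ i, x.2.2 i * y.2.2 i

/-- The Euclidean dual (as a set) of a subset of `Z₃^{3n}`. -/
def dual3Set {n : ℕ} (S : Set ((Fin n → ZMod 3) × (Fin n → ZMod 3) × (Fin n → ZMod 3))) :
    Set ((Fin n → ZMod 3) × (Fin n → ZMod 3) × (Fin n → ZMod 3)) :=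
  {x | ∀ y ∈ S, inner3 x y = 0}

/-- The first associated ternary code `C₁ = {a : ∃ b c, a+vb+v²c ∈ C}`. -/
def assoc1 {n : ℕ} (C : Set (Fin n → R3)) : Set (Fin n → ZMod 3) :=
  {x | ∃ r ∈ C, ∀ i, x i = (r i).a}

/-- The second associated ternary code `C₂ = {a+b+c : a+vb+v²c ∈ C}`. -/
def assoc2 {n : ℕ} (C : Set (Fin n → R3)) : Set (Fin n → ZMod 3) :=
  {x | ∃ r ∈ C, ∀ i, x i = (r i).a + (r i).b + (r i).c}

/-- The third associated ternary code `C₃ = {a+2b+c : a+vb+v²c ∈ C}`. -/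
def assoc3 {n : ℕ} (C : Set (Fin n → R3)) : Set (Fin n → ZMod 3) :=
  {x | ∃ r ∈ C, ∀ i, x i = (r i).a + 2 * (r i).b + (r i).c}

/-- The idempotent `e₁ = 1 + 2v²` of `R`. -/
noncomputable def e1 : R3 := 1 + 2 * R3.v ^ 2
/-- The idempotent `e₂ = 2v + 2v²` of `R`. -/
noncomputable def e2 : R3 := 2 * R3.v + 2 * R3.v ^ 2
/-- The idempotent `e₃ = v + 2v²` of `R`. -/
noncomputable def e3 : R3 := R3.v + 2 * R3.v ^ 2

/-- Coordinatewise inclusion `Z₃^n → R^n`. -/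
def emb {n : ℕ} (x : Fin n → ZMod 3) : Fin n → R3 := fun i => R3.iota (x i)

/-- The code `(1+2v²)C₁ ⊕ (2v+2v²)C₂ ⊕ (v+2v²)C₃ ⊆ R^n` built from three
ternary codes `C₁, C₂, C₃ ⊆ Z₃^n`. -/
def tri {n : ℕ} (C₁ C₂ C₃ : Set (Fin n → ZMod 3)) : Set (Fin n → R3) :=
  {w | ∃ x ∈ C₁, ∃ y ∈ C₂, ∃ z ∈ C₃, w = e1 • emb x + e2 • emb y + e3 • emb z}

open Polynomial in
/-- The polynomial representation `(c₀,…,c_{n-1}) ↦ c₀ + c₁x + … + c_{n-1}x^{n-1}`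
of a vector over `Z₃`. -/
noncomputable def toPolyZ {n : ℕ} (c : Fin n → ZMod 3) : Polynomial (ZMod 3) :=
  ∑ i : Fin n, Polynomial.C (c i) * Polynomial.X ^ (i : ℕ)

open Polynomial in
/-- The polynomial representation of a vector over `R`. -/
noncomputable def toPolyR {n : ℕ} (c : Fin n → R3) : Polynomial R3 :=
  ∑ i : Fin n, Polynomial.C (c i) * Polynomial.X ^ (i : ℕ)

/-- The quotient map `Z₃[x] → Z₃[x]/(xⁿ - ε)`. -/
noncomputable def mkZ (n : ℕ) (ε : ZMod 3) :
    Polynomial (ZMod 3) →+*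
      Polynomial (ZMod 3) ⧸ Ideal.span {Polynomial.X ^ n - Polynomial.C ε} :=
  Ideal.Quotient.mk _

/-- The quotient map `R[x] → R[x]/(xⁿ - ε)`. -/
noncomputable def mkR (n : ℕ) (ε : R3) :
    Polynomial R3 →+* Polynomial R3 ⧸ Ideal.span {Polynomial.X ^ n - Polynomial.C ε} :=
  Ideal.Quotient.mk _

/-- `f` is the generator polynomial of the ternary cyclic (`ε = 1`) resp. negacyclic
(`ε = -1`) code `D` of length `n`: `f` is a monic divisor of `xⁿ - ε` and, under the
polynomial representation, `D` corresponds exactly to the ideal of `Z₃[x]/(xⁿ - ε)`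
generated by `f`. -/
def IsGenPolyZ (n : ℕ) (ε : ZMod 3) (D : Set (Fin n → ZMod 3))
    (f : Polynomial (ZMod 3)) : Prop :=
  f.Monic ∧ f ∣ (Polynomial.X ^ n - Polynomial.C ε) ∧
    {p | ∃ c ∈ D, p = mkZ n ε (toPolyZ c)} = ↑(Ideal.span {mkZ n ε f})

-- Auxiliary development for statement15
open Polynomial

namespace Stmt15

/-! ### Ternary polynomial lemmas -/

section Poly

variable {n : ℕ} [NeZero n]

lemma coeff_toPolyZ (c : Fin n → ZMod 3) (k : ℕ) :
    (toPolyZ c).coeff k = if h : k < n then c ⟨k, h⟩ else 0 := by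
  unfold toPolyZ
  rw [Polynomial.finset_sum_coeff]
  simp only [Polynomial.coeff_C_mul, Polynomial.coeff_X_pow, mul_ite, mul_one, mul_zero]
  split
  · next h =>
    rw [Finset.sum_eq_single (⟨k, h⟩ : Fin n)]
    · simp
    · intro i _ hne
      have : (i : ℕ) ≠ k := by
        intro e; exact hne (Fin.ext e)
      simp [Ne.symm this]
    · intro hk; exact absurd (Finset.mem_univ _) hk
  · next h =>
    apply Finset.sum_eq_zero
    intro i _
    have : (i : ℕ) ≠ k := by
      intro e; exact h (e ▸ i.isLt)
    simp [Ne.symm this]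

lemma toPolyZ_inj {c d : Fin n → ZMod 3} (h : toPolyZ c = toPolyZ d) : c = d := by
  funext i
  have := congrArg (fun p => Polynomial.coeff p (i : ℕ)) h
  simpa [coeff_toPolyZ, i.isLt] using this

lemma natDegree_toPolyZ_le (c : Fin n → ZMod 3) : (toPolyZ c).natDegree ≤ n - 1 := by
  rw [Polynomial.natDegree_le_iff_coeff_eq_zero]
  intro N hN
  have : ¬ N < n := by omega
  simp [coeff_toPolyZ, this]

lemma degree_toPolyZ_lt (c : Fin n → ZMod 3) : (toPolyZ c).degree < (n : ℕ) := by
  rw [Polynomial.degree_lt_iff_coeff_zero]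
  intro m hm
  have : ¬ m < n := by exact_mod_cast not_lt.mpr hm
  simp [coeff_toPolyZ, this]

/-- vector of coefficients of a polynomial -/
def vecOf (n : ℕ) (p : Polynomial (ZMod 3)) : Fin n → ZMod 3 := fun i => p.coeff i

lemma toPolyZ_vecOf {p : Polynomial (ZMod 3)} (hp : p.natDegree ≤ n - 1) :
    toPolyZ (vecOf n p) = p := by
  ext k
  rw [coeff_toPolyZ]
  split
  · rfl
  · next h =>
    symm
    apply Polynomial.coeff_eq_zero_of_natDegree_lt
    have := NeZero.ne n
    omega

lemma mem_code_iff {ε : ZMod 3} {D : Submodule (ZMod 3) (Fin n → ZMod 3)}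
    {f : Polynomial (ZMod 3)} (hg : IsGenPolyZ n ε (D : Set (Fin n → ZMod 3)) f)
    (y : Fin n → ZMod 3) : y ∈ D ↔ f ∣ toPolyZ y := by
  obtain ⟨hmon, hdvd, hset⟩ := hg
  have hms : Ideal.span {mkZ n ε f} =
      (Ideal.span {f}).map (Ideal.Quotient.mk (Ideal.span {(X : (ZMod 3)[X]) ^ n - C ε})) := by
    rw [Ideal.map_span, Set.image_singleton]; rfl
  have hle : Ideal.span ({(X : (ZMod 3)[X]) ^ n - C ε} : Set _) ≤ Ideal.span {f} := by
    rw [Ideal.span_singleton_le_span_singleton]; exact hdvd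
  constructor
  · intro hy
    have hmem : mkZ n ε (toPolyZ y) ∈ Ideal.span {mkZ n ε f} := by
      rw [← SetLike.mem_coe, ← hset]; exact ⟨y, hy, rfl⟩
    rw [hms] at hmem
    have hmem2 : toPolyZ y ∈ Ideal.span {f} ⊔ Ideal.span {(X : (ZMod 3)[X]) ^ n - C ε} :=
      Ideal.mem_quotient_iff_mem_sup.mp hmem
    rw [sup_eq_left.mpr hle] at hmem2
    exact Ideal.mem_span_singleton.1 hmem2
  · intro hdvd'
    have hmem : mkZ n ε (toPolyZ y) ∈ Ideal.span {mkZ n ε f} :=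
      Ideal.mem_span_singleton.2 (map_dvd _ hdvd')
    rw [← SetLike.mem_coe, ← hset] at hmem
    obtain ⟨c, hc, hcy⟩ := hmem
    have hsub : ((X : (ZMod 3)[X]) ^ n - C ε) ∣ (toPolyZ y - toPolyZ c) := by
      rw [← Ideal.mem_span_singleton]
      exact Ideal.Quotient.eq.1 hcy
    have h0 : toPolyZ y - toPolyZ c = 0 := by
      apply Polynomial.eq_zero_of_dvd_of_degree_lt hsub
      calc (toPolyZ y - toPolyZ c).degree
          ≤ max (toPolyZ y).degree (toPolyZ c).degree := Polynomial.degree_sub_le _ _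
        _ < (n : ℕ) := max_lt (degree_toPolyZ_lt _) (degree_toPolyZ_lt _)
        _ = ((X : (ZMod 3)[X]) ^ n - C ε).degree :=
            (Polynomial.degree_X_pow_sub_C (Nat.pos_of_ne_zero (NeZero.ne n)) ε).symm
    have : toPolyZ y = toPolyZ c := sub_eq_zero.1 h0
    rw [toPolyZ_inj this]
    exact hc

lemma mem_dualZ {D : Submodule (ZMod 3) (Fin n → ZMod 3)} {x : Fin n → ZMod 3} :
    x ∈ dualZ D ↔ ∀ y ∈ D, ∑ i, x i * y i = 0 := Iff.rfl

lemma inner_eq (x y : Fin n → ZMod 3) :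
    ∑ i, x i * y i = (toPolyZ x * reflect (n - 1) (toPolyZ y)).coeff (n - 1) := by
  have hn : n - 1 + 1 = n := by have := NeZero.ne n; omega
  rw [Polynomial.coeff_mul, Finset.Nat.sum_antidiagonal_eq_sum_range_succ_mk,
    Nat.succ_eq_add_one, hn, ← Fin.sum_univ_eq_sum_range]
  apply Finset.sum_congr rfl
  intro i _
  have h1 : (i : ℕ) < n := i.isLt
  rw [coeff_reflect, revAt_le (by omega : n - 1 - (i : ℕ) ≤ n - 1), coeff_toPolyZ, coeff_toPolyZ]
  rw [dif_pos h1, dif_pos (show n - 1 - (n - 1 - (i : ℕ)) < n by omega)]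
  have hv : n - 1 - (n - 1 - (i : ℕ)) = (i : ℕ) := by omega
  simp only [hv, Fin.eta]

end Poly

end Stmt15
open Polynomial

namespace Stmt15

section Poly2

variable {n : ℕ} [NeZero n]

lemma mem_dual_iff_coeff {ε : ZMod 3} {D : Submodule (ZMod 3) (Fin n → ZMod 3)}
    {f : Polynomial (ZMod 3)} (hg : IsGenPolyZ n ε (D : Set (Fin n → ZMod 3)) f)
    (x : Fin n → ZMod 3) :
    x ∈ dualZ D ↔ ∀ j, f.natDegree ≤ j → j < n →
      (toPolyZ x * f.reverse).coeff j = 0 := by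
  have hf0 : f ≠ 0 := hg.1.ne_zero
  constructor
  · intro hx j hj1 hj2
    set d := f.natDegree with hd
    set y := vecOf n (f * X ^ (j - d)) with hy
    have hdeg : (f * X ^ (j - d)).natDegree = j := by
      rw [Polynomial.natDegree_mul hf0 (pow_ne_zero _ Polynomial.X_ne_zero),
        Polynomial.natDegree_X_pow]
      omega
    have hty : toPolyZ y = f * X ^ (j - d) := toPolyZ_vecOf (by omega)
    have hyD : y ∈ D := (mem_code_iff hg y).2 (hty ▸ dvd_mul_right f _)
    have h0 := (mem_dualZ).1 hx y hyD
    rw [inner_eq, hty] at h0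
    have hrefl : reflect (n - 1) (f * X ^ (j - d)) = f.reverse * X ^ (n - 1 - j) := by
      have he : d + (n - 1 - d) = n - 1 := by omega
      calc reflect (n - 1) (f * X ^ (j - d))
          = reflect (d + (n - 1 - d)) (f * X ^ (j - d)) := by rw [he]
        _ = reflect d f * reflect (n - 1 - d) (X ^ (j - d)) :=
            reflect_mul f _ le_rfl (by rw [Polynomial.natDegree_X_pow]; omega)
        _ = f.reverse * X ^ (n - 1 - j) := by
            rw [reflect_monomial, revAt_le (by omega : j - d ≤ n - 1 - d),
              (by omega : n - 1 - d - (j - d) = n - 1 - j)]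
            rfl
    rw [hrefl, ← mul_assoc, Polynomial.coeff_mul_X_pow'] at h0
    rw [if_pos (by omega : n - 1 - j ≤ n - 1)] at h0
    have : n - 1 - (n - 1 - j) = j := by omega
    rwa [this] at h0
  · intro hco
    rw [mem_dualZ]
    intro y hyD
    obtain ⟨q, hq⟩ := (mem_code_iff hg y).1 hyD
    rw [inner_eq, hq]
    by_cases hq0 : q = 0
    · simp [hq0]
    · have hdq : f.natDegree + q.natDegree ≤ n - 1 := by
        have h1 : (f * q).natDegree ≤ n - 1 := hq ▸ natDegree_toPolyZ_le y
        rwa [Polynomial.natDegree_mul hf0 hq0] at h1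
      have hsum : f.natDegree + (n - 1 - f.natDegree) = n - 1 := by omega
      have hrfl : reflect (n - 1) (f * q)
          = f.reverse * reflect (n - 1 - f.natDegree) q := by
        calc reflect (n - 1) (f * q)
            = reflect (f.natDegree + (n - 1 - f.natDegree)) (f * q) := by rw [hsum]
          _ = reflect f.natDegree f * reflect (n - 1 - f.natDegree) q :=
              reflect_mul f q le_rfl (by omega)
          _ = f.reverse * reflect (n - 1 - f.natDegree) q := rfl
      rw [hrfl, ← mul_assoc, Polynomial.coeff_mul]
      apply Finset.sum_eq_zero
      rintro ⟨a, b⟩ hab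
      rw [Finset.HasAntidiagonal.mem_antidiagonal] at hab
      dsimp only at hab ⊢
      by_cases hb : b ≤ n - 1 - f.natDegree
      · rw [hco a (by omega) (by have := NeZero.ne n; omega)]
        exact zero_mul _
      · have hq2 : q.coeff b = 0 :=
          Polynomial.coeff_eq_zero_of_natDegree_lt (show q.natDegree < b by omega)
        rw [coeff_reflect, revAt_eq_self_of_lt (show n - 1 - f.natDegree < b by omega), hq2,
          mul_zero]

lemma key_iff {ε : ZMod 3} (hε : ε = 1 ∨ ε = -1) {D : Submodule (ZMod 3) (Fin n → ZMod 3)}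
    {f : Polynomial (ZMod 3)} (hg : IsGenPolyZ n ε (D : Set (Fin n → ZMod 3)) f) :
    dualZ D ≤ D ↔ f * f.reverse ∣ ((X : (ZMod 3)[X]) ^ n - C ε) := by
  have hnpos : 0 < n := Nat.pos_of_ne_zero (NeZero.ne n)
  have hε2 : ε * ε = 1 := by rcases hε with h | h <;> subst h <;> decide
  have hε0 : ε ≠ 0 := by rcases hε with h | h <;> subst h <;> decide
  have hf0 : f ≠ 0 := hg.1.ne_zero
  obtain ⟨h, hfh⟩ := hg.2.1
  have hmonX : ((X : (ZMod 3)[X]) ^ n - C ε).Monic := monic_X_pow_sub_C ε (NeZero.ne n)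
  have hXn0 : ((X : (ZMod 3)[X]) ^ n - C ε) ≠ 0 := hmonX.ne_zero
  have hh0 : h ≠ 0 := by rintro rfl; rw [mul_zero] at hfh; exact hXn0 hfh
  have hdeg_sum : f.natDegree + h.natDegree = n := by
    have := Polynomial.natDegree_mul hf0 hh0
    rw [← hfh, Polynomial.natDegree_X_pow_sub_C] at this
    omega
  have hf00 : f.coeff 0 ≠ 0 := by
    intro h0
    have hx2 : ((X : (ZMod 3)[X]) ^ n - C ε).coeff 0 = 0 :=
      Polynomial.X_dvd_iff.mp (dvd_trans (Polynomial.X_dvd_iff.2 h0) hg.2.1)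
    rw [Polynomial.coeff_sub, Polynomial.coeff_X_pow, Polynomial.coeff_C] at hx2
    simp only [if_neg (show (0 : ℕ) ≠ n by omega), if_pos rfl, zero_sub, neg_eq_zero] at hx2
    exact hε0 hx2
  rcases Nat.eq_zero_or_pos f.natDegree with hd0 | hdpos
  · -- f = 1 : both sides true
    have hf1 : f = 1 := hg.1.natDegree_eq_zero.1 hd0
    constructor
    · intro _
      rw [hf1]
      simpa [Polynomial.reverse] using one_dvd _
    · intro _ x _
      rw [mem_code_iff hg, hf1]
      exact one_dvd _
  · constructor
    · -- dual ⊆ D → f f* ∣ Xⁿ - ε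
      intro hdual
      have hhden : h.natDegree ≤ n - 1 := by omega
      set x := vecOf n (reflect (n - 1) h) with hx
      have hxp : toPolyZ x = reflect (n - 1) h := by
        apply toPolyZ_vecOf
        rw [Polynomial.natDegree_le_iff_coeff_eq_zero]
        intro N hN
        rw [coeff_reflect, revAt_eq_self_of_lt hN]
        exact Polynomial.coeff_eq_zero_of_natDegree_lt (by omega)
      have hxdual : x ∈ dualZ D := by
        rw [mem_dual_iff_coeff hg]
        intro j hj1 hj2
        rw [hxp]
        have : (f.reverse : (ZMod 3)[X]) = reflect f.natDegree f := rfl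
        rw [this, ← reflect_mul h f hhden le_rfl, mul_comm h f, ← hfh,
          coeff_reflect, revAt_le (by omega : j ≤ n - 1 + f.natDegree),
          Polynomial.coeff_sub, Polynomial.coeff_X_pow, Polynomial.coeff_C,
          if_neg (show ¬ n - 1 + f.natDegree - j = n by omega),
          if_neg (show ¬ n - 1 + f.natDegree - j = 0 by omega)]
        simp
      have hxD := hdual hxdual
      rw [mem_code_iff hg, hxp] at hxD
      have hsplit : reflect (n - 1) h = h.reverse * X ^ (f.natDegree - 1) := by
        have e : h.natDegree + (f.natDegree - 1) = n - 1 := by omega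
        calc reflect (n - 1) h = reflect (h.natDegree + (f.natDegree - 1)) (h * 1) := by
              rw [mul_one, e]
          _ = reflect h.natDegree h * reflect (f.natDegree - 1) 1 :=
              reflect_mul h 1 le_rfl (by simp)
          _ = h.reverse * X ^ (f.natDegree - 1) := by
              rw [show (1 : (ZMod 3)[X]) = X ^ 0 by rw [pow_zero], reflect_monomial,
                revAt_zero]
              rfl
      rw [hsplit] at hxD
      obtain ⟨g, hgp⟩ := hxD
      have hCC : (C ε : (ZMod 3)[X]) * C ε = 1 := by rw [← Polynomial.C_mul, hε2, Polynomial.C_1]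
      have h2 : (h * f).reverse = 1 - C ε * X ^ n := by
        rw [mul_comm h f, ← hfh]
        rw [show ((X : (ZMod 3)[X]) ^ n - C ε).reverse = reflect n (X ^ n - C ε) by
          rw [Polynomial.reverse, Polynomial.natDegree_X_pow_sub_C]]
        rw [reflect_sub, reflect_monomial, reflect_C, revAt_le le_rfl, Nat.sub_self, pow_zero]
      have key : f * f.reverse * (g * -(C ε)) = ((X : (ZMod 3)[X]) ^ n - C ε) * X ^ (f.natDegree - 1) := by
        calc f * f.reverse * (g * -(C ε)) = (f * g) * f.reverse * -(C ε) := by ring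
          _ = (h.reverse * X ^ (f.natDegree - 1)) * f.reverse * -(C ε) := by rw [← hgp]
          _ = ((h * f).reverse * -(C ε)) * X ^ (f.natDegree - 1) := by
              rw [Polynomial.reverse_mul_of_domain]; ring
          _ = ((1 - C ε * X ^ n) * -(C ε)) * X ^ (f.natDegree - 1) := by rw [h2]
          _ = ((X : (ZMod 3)[X]) ^ n - C ε) * X ^ (f.natDegree - 1) := by
              linear_combination ((X : (ZMod 3)[X]) ^ n * X ^ (f.natDegree - 1)) * hCC
      have hdvd1 : f * f.reverse ∣ ((X : (ZMod 3)[X]) ^ n - C ε) * X ^ (f.natDegree - 1) :=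
        ⟨g * -(C ε), key.symm⟩
      have hcop : IsCoprime ((X : (ZMod 3)[X]) ^ (f.natDegree - 1)) (f * f.reverse) := by
        apply IsCoprime.pow_left
        rw [Polynomial.prime_X.coprime_iff_not_dvd, Polynomial.X_dvd_iff,
          Polynomial.mul_coeff_zero, Polynomial.coeff_zero_reverse]
        simp [hf00, hg.1.leadingCoeff]
      exact hcop.symm.dvd_of_dvd_mul_right hdvd1
    · -- f f* ∣ Xⁿ - ε → dual ⊆ D
      intro hdvd x hx
      rw [mem_code_iff hg]
      obtain ⟨w, hw⟩ := hdvd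
      set P := toPolyZ x * f.reverse with hP
      have hco := (mem_dual_iff_coeff hg x).1 hx
      set s := P /ₘ ((X : (ZMod 3)[X]) ^ n - C ε) with hs
      set ρ := P %ₘ ((X : (ZMod 3)[X]) ^ n - C ε) with hρ
      have hPe : ρ + ((X : (ZMod 3)[X]) ^ n - C ε) * s = P := modByMonic_add_div P _
      have hρeq : ρ = P - ((X : (ZMod 3)[X]) ^ n - C ε) * s := by
        rw [← hPe]; ring
      have hsdeg : s.natDegree ≤ f.natDegree - 1 := by
        rw [hs, Polynomial.natDegree_divByMonic P hmonX, Polynomial.natDegree_X_pow_sub_C]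
        have hPd : P.natDegree ≤ n - 1 + f.natDegree := by
          calc P.natDegree ≤ (toPolyZ x).natDegree + f.reverse.natDegree :=
                Polynomial.natDegree_mul_le
            _ ≤ n - 1 + f.natDegree :=
                add_le_add (natDegree_toPolyZ_le x) f.reverse_natDegree_le
        omega
      have hρdeg : ∀ j, f.natDegree ≤ j → ρ.coeff j = 0 := by
        intro j hj
        by_cases hjn : j < n
        · rw [hρeq, Polynomial.coeff_sub, hco j hj hjn, sub_mul,
            Polynomial.coeff_sub]
          rw [show ((X : (ZMod 3)[X]) ^ n * s) = s * X ^ n from mul_comm _ _,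
            Polynomial.coeff_mul_X_pow', if_neg (by omega : ¬ n ≤ j),
            Polynomial.coeff_C_mul,
            Polynomial.coeff_eq_zero_of_natDegree_lt (show s.natDegree < j by omega)]
          ring
        · apply Polynomial.coeff_eq_zero_of_degree_lt
          calc ρ.degree < ((X : (ZMod 3)[X]) ^ n - C ε).degree :=
                Polynomial.degree_modByMonic_lt P hmonX
            _ = (n : ℕ) := Polynomial.degree_X_pow_sub_C hnpos ε
            _ ≤ (j : ℕ) := by exact_mod_cast Nat.cast_le.mpr (le_of_not_gt hjn)
      have hρf : f.reverse ∣ ρ := by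
        rw [hρeq, hw]
        exact dvd_sub ⟨toPolyZ x, mul_comm _ _⟩ ⟨f * (w * s), by ring⟩
      have hrevdeg : f.reverse.natDegree = f.natDegree := by
        rw [Polynomial.reverse_natDegree,
          Polynomial.natTrailingDegree_eq_zero.2 (Or.inr hf00)]
        omega
      have hρ0 : ρ = 0 := by
        by_contra hne
        have h1 : f.reverse.natDegree ≤ ρ.natDegree := Polynomial.natDegree_le_of_dvd hρf hne
        have h2 : ρ.coeff ρ.natDegree ≠ 0 := by
          rw [← Polynomial.leadingCoeff]
          exact Polynomial.leadingCoeff_ne_zero.2 hne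
        have h3 : ρ.natDegree < f.natDegree := by
          by_contra hge
          exact h2 (hρdeg _ (le_of_not_gt hge))
        omega
      have hPeq : toPolyZ x * f.reverse = f * (w * s) * f.reverse := by
        rw [← hP]
        rw [hρ0, zero_add] at hPe
        rw [← hPe, hw]; ring
      have hrev0 : f.reverse ≠ 0 := fun hc => hf0 (Polynomial.reverse_eq_zero.1 hc)
      exact ⟨w * s, mul_right_cancel₀ hrev0 hPeq⟩

end Poly2

end Stmt15
namespace Stmt15

/-! ### Structure of codes over R3 via idempotents -/

set_option maxHeartbeats 4000000 in
lemma K1 : ∀ a b c d e f : ZMod 3, (⟨a, b, c⟩ : R3) * ⟨d, e, f⟩ =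
    e1 * R3.iota (a * d) + e2 * R3.iota ((a + b + c) * (d + e + f)) +
      e3 * R3.iota ((a + 2 * b + c) * (d + 2 * e + f)) := by decide

lemma K1' (r s : R3) : r * s =
    e1 * R3.iota (r.a * s.a) + e2 * R3.iota ((r.a + r.b + r.c) * (s.a + s.b + s.c)) +
      e3 * R3.iota ((r.a + 2 * r.b + r.c) * (s.a + 2 * s.b + s.c)) := by
  cases r; cases s; exact K1 _ _ _ _ _ _

set_option maxHeartbeats 800000 in
lemma K2 : ∀ a b c : ZMod 3, e1 * R3.iota a + e2 * R3.iota (a + b + c) +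
    e3 * R3.iota (a + 2 * b + c) = (⟨a, b, c⟩ : R3) := by decide

lemma K2' (r : R3) : e1 * R3.iota r.a + e2 * R3.iota (r.a + r.b + r.c) +
    e3 * R3.iota (r.a + 2 * r.b + r.c) = r := by
  cases r; exact K2 _ _ _

set_option maxHeartbeats 800000 in
lemma K3 : ∀ s t u : ZMod 3,
    (e1 * R3.iota s + e2 * R3.iota t + e3 * R3.iota u).a = s := by decide

set_option maxHeartbeats 800000 in
lemma K4 : ∀ s t u : ZMod 3,
    (e1 * R3.iota s + e2 * R3.iota t + e3 * R3.iota u).a +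
    (e1 * R3.iota s + e2 * R3.iota t + e3 * R3.iota u).b +
    (e1 * R3.iota s + e2 * R3.iota t + e3 * R3.iota u).c = t := by decide

set_option maxHeartbeats 800000 in
lemma K5 : ∀ s t u : ZMod 3,
    (e1 * R3.iota s + e2 * R3.iota t + e3 * R3.iota u).a +
    2 * (e1 * R3.iota s + e2 * R3.iota t + e3 * R3.iota u).b +
    (e1 * R3.iota s + e2 * R3.iota t + e3 * R3.iota u).c = u := by decide

set_option maxHeartbeats 800000 in
lemma K6 : ∀ s t u : ZMod 3,
    e1 * R3.iota s + e2 * R3.iota t + e3 * R3.iota u = 0 ↔ s = 0 ∧ t = 0 ∧ u = 0 := by decide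

section Vec

variable {n : ℕ} [NeZero n]

/-- First Gray component of a vector over `R3`. -/
def pa (w : Fin n → R3) : Fin n → ZMod 3 := fun i => (w i).a
/-- Second Gray component. -/
def pb (w : Fin n → R3) : Fin n → ZMod 3 := fun i => (w i).a + (w i).b + (w i).c
/-- Third Gray component. -/
def pc (w : Fin n → R3) : Fin n → ZMod 3 := fun i => (w i).a + 2 * (w i).b + (w i).c

/-- Combination of three ternary vectors. -/
noncomputable def E (x y z : Fin n → ZMod 3) : Fin n → R3 :=
  fun i => e1 * R3.iota (x i) + e2 * R3.iota (y i) + e3 * R3.iota (z i)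

lemma E_eq (x y z : Fin n → ZMod 3) :
    e1 • emb x + e2 • emb y + e3 • emb z = E x y z := by
  funext i
  simp [E, emb, Pi.smul_apply, smul_eq_mul]

lemma pa_E (x y z : Fin n → ZMod 3) : pa (E x y z) = x := funext fun i => K3 _ _ _
lemma pb_E (x y z : Fin n → ZMod 3) : pb (E x y z) = y := funext fun i => K4 _ _ _
lemma pc_E (x y z : Fin n → ZMod 3) : pc (E x y z) = z := funext fun i => K5 _ _ _

lemma E_pa_pb_pc (w : Fin n → R3) : E (pa w) (pb w) (pc w) = w := funext fun i => K2' (w i)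

lemma mem_tri {C : Submodule R3 (Fin n → R3)} {C₁ C₂ C₃ : Submodule (ZMod 3) (Fin n → ZMod 3)}
    (hC : (C : Set (Fin n → R3)) = tri (C₁ : Set (Fin n → ZMod 3)) C₂ C₃) (w : Fin n → R3) :
    w ∈ C ↔ (pa w ∈ C₁ ∧ pb w ∈ C₂ ∧ pc w ∈ C₃) := by
  constructor
  · intro hw
    have hw' : w ∈ tri (C₁ : Set (Fin n → ZMod 3)) C₂ C₃ := by rw [← hC]; exact hw
    obtain ⟨x, hx, y, hy, z, hz, hwE⟩ := hw'
    rw [E_eq] at hwE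
    rw [hwE, pa_E, pb_E, pc_E]
    exact ⟨hx, hy, hz⟩
  · rintro ⟨h1, h2, h3⟩
    have : w ∈ tri (C₁ : Set (Fin n → ZMod 3)) C₂ C₃ :=
      ⟨pa w, h1, pb w, h2, pc w, h3, by rw [E_eq, E_pa_pb_pc]⟩
    rw [← SetLike.mem_coe, hC]
    exact this

lemma sum_mul_split (x w : Fin n → R3) : ∑ i, x i * w i =
    e1 * R3.iota (∑ i, pa x i * pa w i) + e2 * R3.iota (∑ i, pb x i * pb w i) +
      e3 * R3.iota (∑ i, pc x i * pc w i) := by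
  rw [map_sum, map_sum, map_sum, Finset.mul_sum, Finset.mul_sum, Finset.mul_sum,
    ← Finset.sum_add_distrib, ← Finset.sum_add_distrib]
  exact Finset.sum_congr rfl fun i _ => K1' (x i) (w i)

lemma mem_dualR_iff {C : Submodule R3 (Fin n → R3)}
    {C₁ C₂ C₃ : Submodule (ZMod 3) (Fin n → ZMod 3)}
    (hC : (C : Set (Fin n → R3)) = tri (C₁ : Set (Fin n → ZMod 3)) C₂ C₃) (x : Fin n → R3) :
    x ∈ dualR C ↔ (pa x ∈ dualZ C₁ ∧ pb x ∈ dualZ C₂ ∧ pc x ∈ dualZ C₃) := by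
  constructor
  · intro hx
    have hx' : ∀ w ∈ C, ∑ i, x i * w i = 0 := hx
    refine ⟨?_, ?_, ?_⟩
    · intro y hy
      have hwC : E y 0 0 ∈ C := (mem_tri hC _).2 (by
        rw [pa_E, pb_E, pc_E]; exact ⟨hy, zero_mem _, zero_mem _⟩)
      have h0 := hx' _ hwC
      rw [sum_mul_split, pa_E, pb_E, pc_E] at h0
      exact ((K6 _ _ _).1 h0).1
    · intro y hy
      have hwC : E 0 y 0 ∈ C := (mem_tri hC _).2 (by
        rw [pa_E, pb_E, pc_E]; exact ⟨zero_mem _, hy, zero_mem _⟩)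
      have h0 := hx' _ hwC
      rw [sum_mul_split, pa_E, pb_E, pc_E] at h0
      exact ((K6 _ _ _).1 h0).2.1
    · intro y hy
      have hwC : E 0 0 y ∈ C := (mem_tri hC _).2 (by
        rw [pa_E, pb_E, pc_E]; exact ⟨zero_mem _, zero_mem _, hy⟩)
      have h0 := hx' _ hwC
      rw [sum_mul_split, pa_E, pb_E, pc_E] at h0
      exact ((K6 _ _ _).1 h0).2.2
  · rintro ⟨h1, h2, h3⟩
    intro w hw
    obtain ⟨hw1, hw2, hw3⟩ := (mem_tri hC w).1 hw
    rw [sum_mul_split, h1 _ hw1, h2 _ hw2, h3 _ hw3]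
    simp

lemma main_struct {C : Submodule R3 (Fin n → R3)}
    {C₁ C₂ C₃ : Submodule (ZMod 3) (Fin n → ZMod 3)}
    (hC : (C : Set (Fin n → R3)) = tri (C₁ : Set (Fin n → ZMod 3)) C₂ C₃) :
    dualR C ≤ C ↔ (dualZ C₁ ≤ C₁ ∧ dualZ C₂ ≤ C₂ ∧ dualZ C₃ ≤ C₃) := by
  constructor
  · intro hd
    refine ⟨?_, ?_, ?_⟩
    · intro a ha
      have hx : E a 0 0 ∈ dualR C := (mem_dualR_iff hC _).2 (by
        rw [pa_E, pb_E, pc_E]; exact ⟨ha, zero_mem _, zero_mem _⟩)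
      have := ((mem_tri hC _).1 (hd hx)).1
      rwa [pa_E] at this
    · intro a ha
      have hx : E 0 a 0 ∈ dualR C := (mem_dualR_iff hC _).2 (by
        rw [pa_E, pb_E, pc_E]; exact ⟨zero_mem _, ha, zero_mem _⟩)
      have := ((mem_tri hC _).1 (hd hx)).2.1
      rwa [pb_E] at this
    · intro a ha
      have hx : E 0 0 a ∈ dualR C := (mem_dualR_iff hC _).2 (by
        rw [pa_E, pb_E, pc_E]; exact ⟨zero_mem _, zero_mem _, ha⟩)
      have := ((mem_tri hC _).1 (hd hx)).2.2
      rwa [pc_E] at this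
  · rintro ⟨h1, h2, h3⟩ x hx
    obtain ⟨k1, k2, k3⟩ := (mem_dualR_iff hC x).1 hx
    exact (mem_tri hC x).2 ⟨h1 k1, h2 k2, h3 k3⟩

end Vec

end Stmt15
/-- Let `C = ⟨(1+2v²)f₁, (2v+2v²)f₂, (v+2v²)f₃⟩` be a cyclic (`ε = 1`)
resp. negacyclic (`ε = -1`) code of length `n` over `R`, where `fᵢ` is the generator
polynomial of the associated ternary code `Cᵢ`. Then `C^⊥ ⊆ C` iff
`xⁿ - ε ≡ 0 (mod fᵢ·fᵢ*)` for `i = 1, 2, 3`; equivalently, `C^⊥ ⊆ C` iff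
`Cᵢ^⊥ ⊆ Cᵢ` for `i = 1, 2, 3`. -/
theorem statement15 (n : ℕ) [NeZero n] (ε : ZMod 3) (hε : ε = 1 ∨ ε = -1)
    (C : Submodule R3 (Fin n → R3))
    (C₁ C₂ C₃ : Submodule (ZMod 3) (Fin n → ZMod 3))
    (f₁ f₂ f₃ : Polynomial (ZMod 3))
    (hg₁ : IsGenPolyZ n ε (C₁ : Set (Fin n → ZMod 3)) f₁)
    (hg₂ : IsGenPolyZ n ε (C₂ : Set (Fin n → ZMod 3)) f₂)
    (hg₃ : IsGenPolyZ n ε (C₃ : Set (Fin n → ZMod 3)) f₃)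
    (hC : (C : Set (Fin n → R3)) = tri (C₁ : Set (Fin n → ZMod 3)) C₂ C₃)
    (hShift : consta (R3.iota ε) '' (C : Set (Fin n → R3)) = (C : Set (Fin n → R3))) :
    (dualR C ≤ C ↔
      (f₁ * f₁.reverse ∣ (Polynomial.X ^ n - Polynomial.C ε) ∧
       f₂ * f₂.reverse ∣ (Polynomial.X ^ n - Polynomial.C ε) ∧
       f₃ * f₃.reverse ∣ (Polynomial.X ^ n - Polynomial.C ε))) ∧
    (dualR C ≤ C ↔ (dualZ C₁ ≤ C₁ ∧ dualZ C₂ ≤ C₂ ∧ dualZ C₃ ≤ C₃)) := by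
  have hmain := Stmt15.main_struct hC
  exact ⟨hmain.trans (and_congr (Stmt15.key_iff hε hg₁)
    (and_congr (Stmt15.key_iff hε hg₂) (Stmt15.key_iff hε hg₃))), hmain⟩
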